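/- Let G ⊆ ℂ be open, let h : G → ℂ be a topological embedding (a homeomorphism onto its image, which is open by invariance of domain), let z₀ ∈ G, let V ⊆ ℂ be open with h(G) ⊆ V, and let φ : V → ℂ be holomorphic and injective. Then the eccentric distortions satisfy E_{φ∘h}(z₀) = E_h(z₀). -/

import Mathlib

open Filter
open scoped ENNReal

/-- The eccentricity of a set `A ⊆ ℂ`:
`E(A) = inf {M ≥ 1 : ∃ open disk B with B ⊆ A ⊆ M·B}` (with `inf ∅ = ∞`),
where `M·B` is the disk with the same center as `B` and `M` times its radius. -/
noncomputable def eccentricity (A : Set ℂ) : ℝ≥0∞ :=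
  sInf {M : ℝ≥0∞ | ∃ Mr : ℝ, M = ENNReal.ofReal Mr ∧ 1 ≤ Mr ∧
    ∃ (z : ℂ) (ρ : ℝ), 0 < ρ ∧ Metric.ball z ρ ⊆ A ∧ A ⊆ Metric.ball z (Mr * ρ)}

/-- The eccentric distortion of `h` at `z₀ ∈ G`:
`E_h(z₀) = inf {M ≥ 1 :` there are open sets `A_k ⊆ G` containing `z₀` with
`diam (A_k) → 0`, `E(A_k) ≤ M` and `E(h(A_k)) ≤ M` for all `k}` (with `inf ∅ = ∞`). -/
noncomputable def eccDistortion (G : Set ℂ) (h : ℂ → ℂ) (z₀ : ℂ) : ℝ≥0∞ :=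
  sInf {M : ℝ≥0∞ | 1 ≤ M ∧ ∃ A : ℕ → Set ℂ,
    (∀ k, IsOpen (A k)) ∧ (∀ k, A k ⊆ G) ∧ (∀ k, z₀ ∈ A k) ∧
    Tendsto (fun k => EMetric.diam (A k)) atTop (nhds 0) ∧
    (∀ k, eccentricity (A k) ≤ M) ∧ (∀ k, eccentricity (h '' A k) ≤ M)}

open Metric Set
open scoped Topology

lemma two_point {φ : ℂ → ℂ} {w₀ c : ℂ} (hd : HasStrictDerivAt φ c w₀) (hc : c ≠ 0)
    {δ : ℝ} (hδ : 0 < δ) :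
    ∃ r > 0, ∀ a ∈ Metric.ball w₀ r, ∀ b ∈ Metric.ball w₀ r,
      ‖φ a - φ b‖ ≤ (1 + δ) * ‖c‖ * ‖a - b‖ := by
  have hcpos : 0 < ‖c‖ := norm_pos_iff.mpr hc
  have h := hd.isLittleO.def (mul_pos hδ hcpos)
  rw [Metric.eventually_nhds_iff_ball] at h
  obtain ⟨r, hr, H⟩ := h
  refine ⟨r, hr, fun a ha b hb => ?_⟩
  have hab : (a, b) ∈ Metric.ball (w₀, w₀) r := by
    rw [← ball_prod_same]; exact ⟨ha, hb⟩
  have := H _ hab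
  simp only [ContinuousLinearMap.smulRight_apply, ContinuousLinearMap.one_apply,
    ContinuousLinearMap.toSpanSingleton_apply, smul_eq_mul] at this
  have h2 : ‖φ a - φ b‖ ≤ ‖φ a - φ b - (a - b) * c‖ + ‖(a - b) * c‖ := by
    calc ‖φ a - φ b‖ = ‖(φ a - φ b - (a - b) * c) + (a - b) * c‖ := by ring_nf
    _ ≤ _ := norm_add_le _ _
  rw [norm_mul] at h2
  nlinarith [norm_nonneg (a - b), h2.trans (add_le_add this le_rfl)]

lemma eccentricity_le {A : Set ℂ} {z : ℂ} {ρ Mr : ℝ} (hρ : 0 < ρ) (hMr : 1 ≤ Mr)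
    (h1 : Metric.ball z ρ ⊆ A) (h2 : A ⊆ Metric.ball z (Mr * ρ)) :
    eccentricity A ≤ ENNReal.ofReal Mr :=
  sInf_le ⟨Mr, rfl, hMr, z, ρ, hρ, h1, h2⟩

lemma exists_nhds_ecc_image_le {φ : ℂ → ℂ} {w₀ c : ℂ} (hd : HasStrictDerivAt φ c w₀)
    (hc : c ≠ 0) {ε : ℝ} (hε : 0 < ε) :
    ∃ U ∈ 𝓝 w₀, ∀ B : Set ℂ, B ⊆ U → ∀ (z : ℂ) (ρ Mr : ℝ), 0 < ρ → 1 ≤ Mr →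
      Metric.ball z ρ ⊆ B → B ⊆ Metric.ball z (Mr * ρ) →
      eccentricity (φ '' B) ≤ ENNReal.ofReal (Mr * (1 + ε)) := by
  have hcpos : 0 < ‖c‖ := norm_pos_iff.mpr hc
  set δ : ℝ := min (ε / 3) 1 with hδdef
  have hδ : 0 < δ := lt_min (by linarith) one_pos
  have hδ1 : δ ≤ 1 := min_le_right _ _
  have hδε : (1 + δ) ^ 2 ≤ 1 + ε := by
    have h3 : δ ≤ ε / 3 := min_le_left _ _
    nlinarith
  set ψ : ℂ → ℂ := hd.localInverse φ c w₀ hc with hψdef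
  have hdψ : HasStrictDerivAt ψ c⁻¹ (φ w₀) := hd.to_localInverse hc
  have hcinv : c⁻¹ ≠ 0 := inv_ne_zero hc
  obtain ⟨r₁, hr₁, H₁⟩ := two_point hd hc hδ
  obtain ⟨r₂, hr₂, H₂⟩ := two_point hdψ hcinv hδ
  obtain ⟨r₃, hr₃, H₃⟩ := Metric.eventually_nhds_iff_ball.mp
    ((hd.hasStrictFDerivAt_equiv hc).eventually_right_inverse)
  obtain ⟨r₄, hr₄, H₄⟩ := Metric.eventually_nhds_iff_ball.mp
    ((hd.hasStrictFDerivAt_equiv hc).eventually_left_inverse)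
  set m : ℝ := min r₂ r₃ with hmdef
  have hm : 0 < m := lt_min hr₂ hr₃
  have hφc : ContinuousAt φ w₀ := hd.hasDerivAt.differentiableAt.continuousAt
  obtain ⟨r₆, hr₆, H₆⟩ := Metric.continuousAt_iff.mp hφc (m / 2) (by linarith)
  set r₅ : ℝ := min (min r₁ r₄) (min r₆ (m / (8 * ‖c‖))) with hr₅def
  have hr₅ : 0 < r₅ := lt_min (lt_min hr₁ hr₄) (lt_min hr₆ (by positivity))
  have hr₅1 : r₅ ≤ r₁ := le_trans (min_le_left _ _) (min_le_left _ _)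
  have hr₅4 : r₅ ≤ r₄ := le_trans (min_le_left _ _) (min_le_right _ _)
  have hr₅6 : r₅ ≤ r₆ := le_trans (min_le_right _ _) (min_le_left _ _)
  have hr₅m : r₅ ≤ m / (8 * ‖c‖) := le_trans (min_le_right _ _) (min_le_right _ _)
  refine ⟨Metric.ball w₀ r₅, Metric.ball_mem_nhds _ hr₅, ?_⟩
  intro B hBU z ρ Mr hρ hMr h1 h2
  have hzB : z ∈ B := h1 (Metric.mem_ball_self hρ)
  have hzw : z ∈ Metric.ball w₀ r₅ := hBU hzB
  -- ρ < 4 r₅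
  have hρ4 : ρ < 4 * r₅ := by
    have hpt : z + (ρ / 2 : ℝ) ∈ Metric.ball z ρ := by
      simp only [Metric.mem_ball, dist_eq_norm, add_sub_cancel_left, Complex.norm_real,
        Real.norm_eq_abs]
      rw [abs_of_pos (by linarith)]; linarith
    have h5 : z + (ρ / 2 : ℝ) ∈ Metric.ball w₀ r₅ := hBU (h1 hpt)
    have htr : dist (z + (ρ / 2 : ℝ)) z ≤ dist (z + (ρ / 2 : ℝ)) w₀ + dist w₀ z := dist_triangle _ _ _
    have hd1 : dist (z + (ρ / 2 : ℝ)) z = ρ / 2 := by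
      simp only [dist_eq_norm, add_sub_cancel_left, Complex.norm_real, Real.norm_eq_abs]
      rw [abs_of_pos (by linarith)]
    rw [hd1] at htr
    rw [Metric.mem_ball] at h5 hzw
    rw [dist_comm w₀ z] at htr
    linarith
  set ρ'' : ℝ := ‖c‖ * ρ / (1 + δ) with hρ''def
  have hρ'' : 0 < ρ'' := by positivity
  set v : ℂ := φ z with hvdef
  have hvm : dist v (φ w₀) < m / 2 := H₆ (Metric.mem_ball.mp (lt_of_lt_of_le (Metric.mem_ball.mp hzw) hr₅6))
  have hρ''m : ρ'' ≤ m / 2 := by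
    have h7 : ρ'' ≤ ‖c‖ * ρ := by
      rw [hρ''def]
      exact div_le_self (by positivity) (by linarith)
    have h8 : ‖c‖ * ρ ≤ ‖c‖ * (4 * r₅) := by nlinarith
    have h9 : ‖c‖ * (4 * r₅) ≤ ‖c‖ * (4 * (m / (8 * ‖c‖))) := by nlinarith
    have habs : ‖c‖ ≠ 0 := norm_ne_zero_iff.mpr hc
    have h10 : ‖c‖ * (4 * (m / (8 * ‖c‖))) = m / 2 := by
      field_simp [habs]
      ring
    linarith
  -- outer containment
  have houter : φ '' B ⊆ Metric.ball v ((1 + δ) * ‖c‖ * (Mr * ρ)) := by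
    rintro _ ⟨b, hb, rfl⟩
    have hbw : b ∈ Metric.ball w₀ r₁ := Metric.ball_subset_ball hr₅1 (hBU hb)
    have hzw1 : z ∈ Metric.ball w₀ r₁ := Metric.ball_subset_ball hr₅1 hzw
    have hest := H₁ b hbw z hzw1
    have hbz : ‖b - z‖ < Mr * ρ := by
      have := h2 hb; rwa [Metric.mem_ball, dist_eq_norm] at this
    rw [Metric.mem_ball, dist_eq_norm]
    calc ‖φ b - φ z‖ ≤ (1 + δ) * ‖c‖ * ‖b - z‖ := hest
    _ < (1 + δ) * ‖c‖ * (Mr * ρ) := by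
        apply mul_lt_mul_of_pos_left hbz (by positivity)
  -- inner containment
  have hinner : Metric.ball v ρ'' ⊆ φ '' B := by
    intro u hu
    have hu' : dist u v < ρ'' := Metric.mem_ball.mp hu
    have hum : u ∈ Metric.ball (φ w₀) m := by
      rw [Metric.mem_ball]
      calc dist u (φ w₀) ≤ dist u v + dist v (φ w₀) := dist_triangle _ _ _
      _ < ρ'' + m / 2 := by linarith
      _ ≤ m := by linarith
    have hvm' : v ∈ Metric.ball (φ w₀) m := by
      rw [Metric.mem_ball]; linarith
    have hψv : ψ v = z := H₄ z (Metric.mem_ball.mp (lt_of_lt_of_le (Metric.mem_ball.mp hzw) hr₅4))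
    have hu2 : u ∈ Metric.ball (φ w₀) r₂ := Metric.ball_subset_ball (min_le_left _ _) hum
    have hv2 : v ∈ Metric.ball (φ w₀) r₂ := Metric.ball_subset_ball (min_le_left _ _) hvm'
    have hest := H₂ u hu2 v hv2
    have hwz : ‖ψ u - z‖ < ρ := by
      rw [← hψv]
      have huv : ‖u - v‖ < ρ'' := by rwa [dist_eq_norm] at hu'
      have h11 : (1 + δ) * ‖c⁻¹‖ * ‖u - v‖ < (1 + δ) * ‖c⁻¹‖ * ρ'' :=
        mul_lt_mul_of_pos_left huv (mul_pos (by linarith) (norm_pos_iff.mpr hcinv))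
      have habs : ‖c‖ ≠ 0 := norm_ne_zero_iff.mpr hc
      have h1δ : (1 : ℝ) + δ ≠ 0 := by linarith
      have h12 : (1 + δ) * ‖c⁻¹‖ * ρ'' = ρ := by
        rw [norm_inv, hρ''def]
        rw [div_eq_mul_inv]
        have e1 : ‖c‖⁻¹ * ‖c‖ = 1 := inv_mul_cancel₀ (ne_of_gt hcpos)
        have e2 : (1 + δ) * (1 + δ)⁻¹ = 1 := mul_inv_cancel₀ h1δ
        calc (1 + δ) * ‖c‖⁻¹ * (‖c‖ * ρ * (1 + δ)⁻¹)
            = (‖c‖⁻¹ * ‖c‖) * ((1 + δ) * (1 + δ)⁻¹) * ρ := by ring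
        _ = ρ := by rw [e1, e2]; ring
      calc ‖ψ u - ψ v‖ ≤ (1 + δ) * ‖c⁻¹‖ * ‖u - v‖ := hest
      _ < ρ := by rw [← h12]; exact h11
    have hmem : ψ u ∈ Metric.ball z ρ := by rwa [Metric.mem_ball, dist_eq_norm]
    have hu3 : u ∈ Metric.ball (φ w₀) r₃ := Metric.ball_subset_ball (min_le_right _ _) hum
    exact ⟨ψ u, h1 hmem, H₃ u (Metric.mem_ball.mp hu3)⟩
  -- conclude
  have hMr' : 1 ≤ Mr * (1 + δ) ^ 2 := by nlinarith
  have hcne : ‖c‖ ≠ 0 := ne_of_gt hcpos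
  have h1δ : (1 : ℝ) + δ ≠ 0 := by linarith
  have hrad : Mr * (1 + δ) ^ 2 * ρ'' = (1 + δ) * ‖c‖ * (Mr * ρ) := by
    rw [hρ''def, div_eq_mul_inv]
    have e2 : (1 + δ) * (1 + δ)⁻¹ = 1 := mul_inv_cancel₀ h1δ
    calc Mr * (1 + δ) ^ 2 * (‖c‖ * ρ * (1 + δ)⁻¹)
        = ((1 + δ) * (1 + δ)⁻¹) * ((1 + δ) * ‖c‖ * (Mr * ρ)) := by ring
    _ = (1 + δ) * ‖c‖ * (Mr * ρ) := by rw [e2]; ring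
  have := eccentricity_le hρ'' hMr' hinner (by rw [hrad]; exact houter)
  refine le_trans this (ENNReal.ofReal_le_ofReal ?_)
  nlinarith

lemma eccDistortion_le_of_eventuallyEq {G : Set ℂ} {h₁ h₂ : ℂ → ℂ} {z₀ : ℂ}
    (heq : ∀ᶠ w in 𝓝 z₀, w ∈ G → h₁ w = h₂ w) :
    eccDistortion G h₁ z₀ ≤ eccDistortion G h₂ z₀ := by
  apply le_sInf
  rintro M ⟨hM1, A, hAo, hAG, hAz, hdiam, hE1, hE2⟩
  obtain ⟨t, ht, hball⟩ := Metric.eventually_nhds_iff_ball.mp heq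
  have hev : ∀ᶠ k in atTop, EMetric.diam (A k) < ENNReal.ofReal t :=
    hdiam.eventually_lt_const (ENNReal.ofReal_pos.mpr ht)
  obtain ⟨N, hN⟩ := eventually_atTop.mp hev
  apply sInf_le
  refine ⟨hM1, fun k => A (k + N), fun k => hAo _, fun k => hAG _, fun k => hAz _,
    hdiam.comp (tendsto_add_atTop_nat N), fun k => hE1 _, fun k => ?_⟩
  have himeq : h₁ '' A (k + N) = h₂ '' A (k + N) := by
    apply Set.image_congr
    intro a ha
    apply hball
    · rw [Metric.mem_ball, ← edist_lt_ofReal]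
      exact lt_of_le_of_lt (EMetric.edist_le_diam_of_mem ha (hAz (k + N)))
        (hN _ (Nat.le_add_left N k))
    · exact hAG _ ha
  rw [himeq]; exact hE2 _

lemma eccDistortion_comp_le {G : Set ℂ} {h φ : ℂ → ℂ} {z₀ c : ℂ}
    (hcont : ContinuousWithinAt h G z₀)
    (hd : HasStrictDerivAt φ c (h z₀)) (hc : c ≠ 0) :
    eccDistortion G (φ ∘ h) z₀ ≤ eccDistortion G h z₀ := by
  apply le_sInf
  rintro M ⟨hM1, A, hAo, hAG, hAz, hdiam, hE1, hE2⟩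
  rcases eq_top_or_lt_top M with rfl | hMtop
  · exact le_top
  apply ENNReal.le_of_forall_pos_le_add
  intro η hη _
  set ηe : ℝ≥0∞ := (η : ℝ≥0∞) with hηedef
  have hηe0 : ηe ≠ 0 := by
    simp only [hηedef, ne_eq, ENNReal.coe_eq_zero]
    exact hη.ne'
  have hηe2 : ηe / 2 ≠ 0 := by
    simp [ENNReal.div_eq_zero_iff, hηe0]
  have hM2top : M + ηe / 2 ≠ ⊤ := by
    refine ENNReal.add_ne_top.mpr ⟨hMtop.ne, ?_⟩
    exact (ENNReal.div_lt_top ENNReal.coe_ne_top (by norm_num)).ne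
  set m' : ℝ := (M + ηe / 2).toReal with hm'def
  have hm'1 : 1 ≤ m' := by
    have h1le : (1 : ℝ≥0∞) ≤ M + ηe / 2 := le_trans hM1 le_self_add
    calc (1 : ℝ) = (1 : ℝ≥0∞).toReal := by simp
    _ ≤ m' := ENNReal.toReal_mono hM2top h1le
  have hm'0 : 0 < m' := by linarith
  have hηR : 0 < (η : ℝ) := hη
  set ε : ℝ := ((η : ℝ) / 2) / m' with hεdef
  have hε : 0 < ε := by positivity
  obtain ⟨U, hU, HU⟩ := exists_nhds_ecc_image_le hd hc hε
  have hpre : h ⁻¹' U ∈ 𝓝[G] z₀ := hcont hU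
  obtain ⟨t, ht, hsub⟩ := Metric.mem_nhdsWithin_iff.mp hpre
  have hev : ∀ᶠ k in atTop, EMetric.diam (A k) < ENNReal.ofReal t :=
    hdiam.eventually_lt_const (ENNReal.ofReal_pos.mpr ht)
  obtain ⟨N, hN⟩ := eventually_atTop.mp hev
  have himg : ∀ k, h '' A (k + N) ⊆ U := by
    intro k x hx
    obtain ⟨a, ha, rfl⟩ := hx
    apply hsub
    refine ⟨?_, hAG _ ha⟩
    rw [Metric.mem_ball, ← edist_lt_ofReal]
    exact lt_of_le_of_lt (EMetric.edist_le_diam_of_mem ha (hAz (k + N)))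
      (hN _ (Nat.le_add_left N k))
  have hkey : ∀ k, eccentricity ((φ ∘ h) '' A (k + N)) ≤ M + ηe := by
    intro k
    have hlt : eccentricity (h '' A (k + N)) < M + ηe / 2 :=
      lt_of_le_of_lt (hE2 _) (ENNReal.lt_add_right hMtop.ne hηe2)
    obtain ⟨s, hsmem, hslt⟩ := sInf_lt_iff.mp hlt
    obtain ⟨Mr, rfl, hMr1, z, ρ, hρ, hb1, hb2⟩ := hsmem
    have hMrle : Mr ≤ m' := by
      rw [hm'def]
      exact (ENNReal.ofReal_le_iff_le_toReal hM2top).mp hslt.le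
    have hEimg := HU _ (himg k) z ρ Mr hρ hMr1 hb1 hb2
    rw [Set.image_comp]
    refine le_trans hEimg ?_
    have hMrε : Mr * ε ≤ (η : ℝ) / 2 := by
      have h1 : Mr * ε ≤ m' * ε := mul_le_mul_of_nonneg_right hMrle hε.le
      have h2 : m' * ε = (η : ℝ) / 2 := by
        rw [hεdef, mul_comm, div_mul_cancel₀ _ (ne_of_gt hm'0)]
      linarith
    have hofη : ENNReal.ofReal ((η : ℝ) / 2) = ηe / 2 := by
      rw [ENNReal.ofReal_div_of_pos (by norm_num), ENNReal.ofReal_coe_nnreal]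
      norm_num
      rfl
    calc ENNReal.ofReal (Mr * (1 + ε))
        = ENNReal.ofReal Mr + ENNReal.ofReal (Mr * ε) := by
          rw [← ENNReal.ofReal_add (by linarith) (by positivity)]
          ring_nf
    _ ≤ (M + ηe / 2) + ηe / 2 := by
          refine add_le_add hslt.le ?_
          rw [← hofη]
          exact ENNReal.ofReal_le_ofReal hMrε
    _ = M + ηe := by rw [add_assoc, ENNReal.add_halves]
  apply sInf_le
  exact ⟨le_trans hM1 le_self_add, fun k => A (k + N), fun k => hAo _, fun k => hAG _,
    fun k => hAz _, hdiam.comp (tendsto_add_atTop_nat N),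
    fun k => le_trans (hE1 _) le_self_add, hkey⟩

lemma deriv_ne_zero_of_injOn {V : Set ℂ} {φ : ℂ → ℂ} (hV : IsOpen V)
    (hφ : DifferentiableOn ℂ φ V) (hinj : Set.InjOn φ V) {w₀ : ℂ} (hw₀ : w₀ ∈ V) :
    deriv φ w₀ ≠ 0 := by
  have han : AnalyticOnNhd ℂ φ V := hφ.analyticOnNhd hV
  have hand : AnalyticOnNhd ℂ (deriv φ) V := han.deriv_of_isOpen hV
  have hpt : ∀ (w : ℂ) (s : ℝ), 0 < s →
      (w + (s / 2 : ℝ)) ∈ Metric.ball w s ∧ w + (s / 2 : ℝ) ≠ w := by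
    intro w s hs
    constructor
    · rw [Metric.mem_ball, dist_eq_norm, add_sub_cancel_left, Complex.norm_real,
        Real.norm_eq_abs, abs_of_pos (by linarith)]
      linarith
    · intro hcontra
      have h1 : ((s / 2 : ℝ) : ℂ) = 0 := by
        have := add_eq_left.mp hcontra
        exact this
      rw [Complex.ofReal_eq_zero] at h1
      linarith
  have hnc : ∀ w ∈ V, ¬ (∀ᶠ z in 𝓝 w, φ z = φ w) := by
    intro w hw hevc
    obtain ⟨s, hs, hball⟩ := Metric.eventually_nhds_iff_ball.mp
      (hevc.and (hV.eventually_mem hw))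
    obtain ⟨hmem, hne⟩ := hpt w s hs
    obtain ⟨heqv, hmemV⟩ := hball _ hmem
    exact hne (hinj hmemV hw heqv)
  have hne0 : ∀ᶠ w in 𝓝[≠] w₀, deriv φ w ≠ 0 := by
    rcases (hand w₀ hw₀).eventually_eq_zero_or_eventually_ne_zero with hcase | hcase
    · exfalso
      obtain ⟨s, hs, hball⟩ := Metric.eventually_nhds_iff_ball.mp
        (hcase.and (hV.eventually_mem hw₀))
      apply hnc w₀ hw₀
      have hconst : ∀ z ∈ Metric.ball w₀ s, φ z = φ w₀ := by
        intro z hz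
        apply (convex_ball w₀ s).is_const_of_fderivWithin_eq_zero
          (hφ.mono fun x hx => (hball x hx).2) ?_ hz (Metric.mem_ball_self hs)
        intro x hx
        have hdiff : DifferentiableAt ℂ φ x :=
          hφ.differentiableAt (hV.mem_nhds (hball x hx).2)
        have hder : HasDerivAt φ 0 x := by
          have h0 := hdiff.hasDerivAt
          rwa [(hball x hx).1] at h0
        have hfd : HasFDerivAt φ (0 : ℂ →L[ℂ] ℂ) x := by
          have h1 := hder.hasFDerivAt
          have h2 : ContinuousLinearMap.toSpanSingleton ℂ (0 : ℂ) = 0 := by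
            ext y; simp
          rwa [h2] at h1
        exact (hfd.hasFDerivWithinAt).fderivWithin (Metric.isOpen_ball.uniqueDiffWithinAt hx)
      filter_upwards [Metric.ball_mem_nhds w₀ hs] with z hz using hconst z hz
    · exact hcase
  intro h0
  obtain ⟨r₁, hr₁, hball₁⟩ := Metric.eventually_nhds_iff_ball.mp
    ((eventually_nhdsWithin_iff.mp hne0).and (hV.eventually_mem hw₀))
  have hSV : Metric.ball w₀ r₁ ⊆ V := fun x hx => (hball₁ x hx).2
  have hopen : ∀ w ∈ V, 𝓝 (φ w) ≤ map φ (𝓝 w) := fun w hw =>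
    ((han w hw).eventually_constant_or_nhds_le_map_nhds).resolve_left (hnc w hw)
  set ψ : ℂ → ℂ := Function.invFunOn φ V with hψdef
  have hψleft : ∀ x ∈ V, ψ (φ x) = x := fun x hx => hinj.leftInvOn_invFunOn hx
  have hψv₀ : ψ (φ w₀) = w₀ := hψleft w₀ hw₀
  have hmapid : map (ψ ∘ φ) (𝓝 w₀) = 𝓝 w₀ := by
    have hcongr : (ψ ∘ φ) =ᶠ[𝓝 w₀] id := by
      filter_upwards [hV.eventually_mem hw₀] with x hx using hψleft x hx
    rw [Filter.map_congr hcongr, Filter.map_id]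
  have hcontψ : ContinuousAt ψ (φ w₀) := by
    have : Tendsto ψ (𝓝 (φ w₀)) (𝓝 w₀) := by
      calc map ψ (𝓝 (φ w₀)) ≤ map ψ (map φ (𝓝 w₀)) := map_mono (hopen w₀ hw₀)
      _ = map (ψ ∘ φ) (𝓝 w₀) := Filter.map_map
      _ = 𝓝 w₀ := hmapid
    rwa [ContinuousAt, hψv₀]
  have hWmem : φ '' Metric.ball w₀ r₁ ∈ 𝓝 (φ w₀) :=
    hopen w₀ hw₀ (image_mem_map (Metric.ball_mem_nhds _ hr₁))
  obtain ⟨s₁, hs₁, hballW⟩ := Metric.mem_nhds_iff.mp hWmem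
  have hdiffψ : ∀ᶠ v in 𝓝[≠] (φ w₀), DifferentiableAt ℂ ψ v := by
    have hmem : Metric.ball (φ w₀) s₁ \ {φ w₀} ∈ 𝓝[≠] (φ w₀) :=
      diff_mem_nhdsWithin_compl (Metric.ball_mem_nhds _ hs₁) _
    filter_upwards [hmem] with v hv
    obtain ⟨hv1, hv2⟩ := hv
    obtain ⟨w, hwball, hφw⟩ := hballW hv1
    have hwV : w ∈ V := hSV hwball
    have hwne : w ≠ w₀ := by
      rintro rfl
      exact hv2 (by rw [← hφw]; rfl)
    have hder : deriv φ w ≠ 0 :=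
      (hball₁ w hwball).1 (Set.mem_compl_singleton_iff.mpr hwne)
    obtain ⟨p, hp⟩ := han w hwV
    have hsd : HasStrictDerivAt φ (deriv φ w) w := by
      have h1 := hp.hasStrictDerivAt
      rwa [← hp.deriv] at h1
    have hgev : ∀ᶠ x in 𝓝 w, ψ (φ x) = x := by
      filter_upwards [hV.eventually_mem hwV] with x hx using hψleft x hx
    have hinv := hsd.to_local_left_inverse hder hgev
    rw [← hφw]
    exact hinv.hasDerivAt.differentiableAt
  have hψan : AnalyticAt ℂ ψ (φ w₀) :=
    Complex.analyticAt_of_differentiable_on_punctured_nhds_of_continuousAt hdiffψ hcontψ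
  have hψd : HasDerivAt ψ (deriv ψ (φ w₀)) (φ w₀) := hψan.differentiableAt.hasDerivAt
  have hφd : HasDerivAt φ 0 w₀ := by
    have h1 := (hφ.differentiableAt (hV.mem_nhds hw₀)).hasDerivAt
    rwa [h0] at h1
  have hcomp : HasDerivAt (ψ ∘ φ) (deriv ψ (φ w₀) * 0) w₀ := hψd.comp w₀ hφd
  have hid : HasDerivAt (id : ℂ → ℂ) (deriv ψ (φ w₀) * 0) w₀ := by
    apply hcomp.congr_of_eventuallyEq
    filter_upwards [hV.eventually_mem hw₀] with x hx
    exact (hψleft x hx).symm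
  have hcontra := hid.unique (hasDerivAt_id w₀)
  simp at hcontra

/-- Eccentric distortion is invariant under postcomposition with an injective holomorphic
map defined on an open set containing the image: if `G` is open, `h : G → ℂ` is a
topological embedding, `V ⊇ h(G)` is open and `φ : V → ℂ` is holomorphic and injective,
then `E_{φ∘h}(z₀) = E_h(z₀)` for every `z₀ ∈ G`. -/
theorem eccDistortion_comp_conformal (G : Set ℂ) (hG : IsOpen G) (h : ℂ → ℂ)
    (hcont : ContinuousOn h G) (hinj : Set.InjOn h G)
    (z₀ : ℂ) (hz₀ : z₀ ∈ G)
    (V : Set ℂ) (hV : IsOpen V) (hGV : h '' G ⊆ V)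
    (φ : ℂ → ℂ) (hφ : DifferentiableOn ℂ φ V) (hφinj : Set.InjOn φ V) :
    eccDistortion G (φ ∘ h) z₀ = eccDistortion G h z₀ := by
  have hw₀V : h z₀ ∈ V := hGV ⟨z₀, hz₀, rfl⟩
  have hφan : AnalyticAt ℂ φ (h z₀) := hφ.analyticAt (hV.mem_nhds hw₀V)
  have hc : deriv φ (h z₀) ≠ 0 := deriv_ne_zero_of_injOn hV hφ hφinj hw₀V
  obtain ⟨p, hp⟩ := hφan
  have hsd : HasStrictDerivAt φ (deriv φ (h z₀)) (h z₀) := by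
    have h1 := hp.hasStrictDerivAt
    rwa [← hp.deriv] at h1
  apply le_antisymm
  · exact eccDistortion_comp_le (hcont.continuousWithinAt hz₀) hsd hc
  · set ψ : ℂ → ℂ := hsd.localInverse φ _ (h z₀) hc with hψdef
    have hψd : HasStrictDerivAt ψ (deriv φ (h z₀))⁻¹ ((φ ∘ h) z₀) := hsd.to_localInverse hc
    have hφh : ContinuousWithinAt (φ ∘ h) G z₀ :=
      (hsd.hasDerivAt.differentiableAt.continuousAt).comp_continuousWithinAt (hcont.continuousWithinAt hz₀)
    have h2 : eccDistortion G (ψ ∘ (φ ∘ h)) z₀ ≤ eccDistortion G (φ ∘ h) z₀ :=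
      eccDistortion_comp_le hφh hψd (inv_ne_zero hc)
    have hev : ∀ᶠ x in 𝓝 (h z₀), ψ (φ x) = x :=
      (hsd.hasStrictFDerivAt_equiv hc).eventually_left_inverse
    have hevG : ∀ᶠ w in 𝓝[G] z₀, ψ (φ (h w)) = h w :=
      (hcont.continuousWithinAt hz₀).eventually hev
    have heq : ∀ᶠ w in 𝓝 z₀, w ∈ G → h w = (ψ ∘ (φ ∘ h)) w :=
      (eventually_nhdsWithin_iff.mp hevG).mono fun w hw hwG => (hw hwG).symm
    exact le_trans (eccDistortion_le_of_eventuallyEq heq) h2
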